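/- Let n ≥ 1 and let ℐ be an interval system on {1,…,n}. Let ε_ℐ : ℝ^{2^n} → ℝ be the linear functional a ↦ Σ_{S ∈ B_{{1,…,n}}(ℐ)} a_S. Then the cone K_{n+1} linearly spans all of ℝ^{2^n}, ε_ℐ is nonnegative on K_{n+1}, and the face K_{n+1} ∩ ker(ε_ℐ) is a facet of K_{n+1}, i.e., its linear span has dimension 2^n − 1. -/

import Mathlib

/-- A graded poset: a finite poset with a least element `bot`, a greatest element `top`,
and a rank function that is `0` at `bot` and increases by one along covering relations. -/
structure GradedPoset where
  carrier : Type
  [fintypeCarrier : Fintype carrier]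
  [partialOrderCarrier : PartialOrder carrier]
  bot : carrier
  top : carrier
  bot_le : ∀ x : carrier, bot ≤ x
  le_top : ∀ x : carrier, x ≤ top
  rank : carrier → ℕ
  rank_bot : rank bot = 0
  rank_covBy : ∀ x y : carrier, x ⋖ y → rank y = rank x + 1

attribute [instance] GradedPoset.fintypeCarrier GradedPoset.partialOrderCarrier

namespace GradedPoset
variable (P : GradedPoset)

lemma exists_covby_le {x y : P.carrier} (h : x < y) : ∃ z, x ⋖ z ∧ z ≤ y := by
  classical
  obtain ⟨m, hm, hmin⟩ : ∃ m ∈ Finset.univ.filter (fun z => x < z ∧ z ≤ y),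
      ∀ w ∈ Finset.univ.filter (fun z => x < z ∧ z ≤ y), ¬ w < m := by
    obtain ⟨m, hm⟩ := (Finset.univ.filter (fun z => x < z ∧ z ≤ y)).exists_minimal ⟨y, by simp [h]⟩
    exact ⟨m, hm.1, fun w hw hlt => hlt.not_ge (hm.2 hw hlt.le)⟩
  simp only [Finset.mem_filter, Finset.mem_univ, true_and] at hm hmin
  refine ⟨m, ⟨hm.1, fun w hw hwm => ?_⟩, hm.2⟩
  exact hmin w ⟨hw, le_of_lt (lt_of_lt_of_le hwm hm.2)⟩ hwm

lemma le_covby_of_lt {x y : P.carrier} (h : x < y) : ∃ w, x ≤ w ∧ w ⋖ y := by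
  classical
  obtain ⟨m, hm, hmax⟩ : ∃ m ∈ Finset.univ.filter (fun w => x ≤ w ∧ w < y),
      ∀ w ∈ Finset.univ.filter (fun w => x ≤ w ∧ w < y), ¬ m < w := by
    obtain ⟨m, hm⟩ := (Finset.univ.filter (fun w => x ≤ w ∧ w < y)).exists_maximal
      ⟨x, by simp [le_refl, h]⟩
    exact ⟨m, hm.1, fun w hw hlt => hlt.not_ge (hm.2 hw hlt.le)⟩
  simp only [Finset.mem_filter, Finset.mem_univ, true_and] at hm hmax
  refine ⟨m, hm.1, hm.2, fun w hmw hwy => ?_⟩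
  exact hmax w ⟨le_of_lt (lt_of_le_of_lt hm.1 hmw), hwy⟩ hmw

lemma rank_lt_of_lt : ∀ {y x : P.carrier}, x < y → P.rank x < P.rank y := by
  have : WellFoundedLT P.carrier := Finite.to_wellFoundedLT
  intro y
  induction y using WellFoundedLT.induction with
  | _ y ih =>
    intro x hxy
    obtain ⟨w, hxw, hwy⟩ := P.le_covby_of_lt hxy
    have hr := P.rank_covBy w y hwy
    rcases eq_or_lt_of_le hxw with rfl | hlt
    · omega
    · have := ih w hwy.lt hlt
      omega

lemma rank_le_of_le {x y : P.carrier} (h : x ≤ y) : P.rank x ≤ P.rank y := by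
  rcases eq_or_lt_of_le h with rfl | hlt
  · exact le_refl _
  · exact le_of_lt (P.rank_lt_of_lt hlt)

lemma exists_rank_between : ∀ (k : ℕ) {x y : P.carrier} (r : ℕ), x ≤ y →
    r = P.rank x + k → r ≤ P.rank y → ∃ z, x ≤ z ∧ z ≤ y ∧ P.rank z = r := by
  intro k
  induction k with
  | zero => intro x y r hxy hr _; exact ⟨x, le_refl _, hxy, by omega⟩
  | succ k ih =>
    intro x y r hxy hr hry
    have hlt : x < y := by
      rcases eq_or_lt_of_le hxy with rfl | h
      · omega
      · exact h
    obtain ⟨z, hxz, hzy⟩ := P.exists_covby_le hlt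
    have hrz := P.rank_covBy x z hxz
    obtain ⟨w, h1, h2, h3⟩ := ih (x := z) (y := y) r hzy (by omega) hry
    exact ⟨w, le_trans hxz.le h1, h2, h3⟩

end GradedPoset

/-- The flag number `f_S(P)`: the number of chains in `P` whose set of ranks is `S`. -/
noncomputable def flagNum (P : GradedPoset) (S : Finset ℕ) : ℕ :=
  Set.ncard {c : Finset P.carrier |
    IsChain (· ≤ ·) (↑c : Set P.carrier) ∧ c.image P.rank = S}

namespace GradedPoset
variable (P : GradedPoset)

/-- In a chain, ranks are injective. -/
lemma chain_rank_inj {c : Finset P.carrier} (hc : IsChain (· ≤ ·) (↑c : Set P.carrier))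
    {x y : P.carrier} (hx : x ∈ c) (hy : y ∈ c) (h : P.rank x = P.rank y) : x = y := by
  by_contra hne
  rcases hc hx hy hne with hle | hle
  · exact absurd h (Nat.ne_of_lt (P.rank_lt_of_lt (lt_of_le_of_ne hle hne)))
  · exact absurd h.symm (Nat.ne_of_lt (P.rank_lt_of_lt (lt_of_le_of_ne hle (Ne.symm hne))))

/-- One-step chain extension: add an element of rank `r`. -/
lemma chain_insert [DecidableEq P.carrier] (hr : 1 ≤ P.rank P.top) {c : Finset P.carrier}
    (hc : IsChain (· ≤ ·) (↑c : Set P.carrier)) {r : ℕ}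
    (h1 : 1 ≤ r) (h2 : r ≤ P.rank P.top - 1) (hnot : r ∉ c.image P.rank) :
    ∃ z, z ∉ c ∧ IsChain (· ≤ ·) (↑(insert z c) : Set P.carrier) ∧ P.rank z = r := by
  classical
  have hrtop : r < P.rank P.top := by omega
  have hrne : ∀ x ∈ c, P.rank x ≠ r := by
    intro x hx hcon
    exact hnot (Finset.mem_image.2 ⟨x, hx, hcon⟩)
  set cL := c.filter (fun x => P.rank x < r) with hcL
  set cU := c.filter (fun x => r < P.rank x) with hcU
  have hsplit : ∀ w ∈ c, w ∈ cL ∨ w ∈ cU := by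
    intro w hw
    have := hrne w hw
    by_cases h : P.rank w < r
    · exact Or.inl (Finset.mem_filter.2 ⟨hw, h⟩)
    · exact Or.inr (Finset.mem_filter.2 ⟨hw, by omega⟩)
  have hlow : ∃ x₀, P.rank x₀ < r ∧ (∀ w ∈ cL, w ≤ x₀) ∧ (x₀ = P.bot ∨ x₀ ∈ c) := by
    rcases Finset.eq_empty_or_nonempty cL with he | hne
    · exact ⟨P.bot, by rw [P.rank_bot]; omega, by simp [he], Or.inl rfl⟩
    · obtain ⟨m, hm, hmax⟩ : ∃ m ∈ cL, ∀ w ∈ cL, ¬ m < w := by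
        obtain ⟨m, hm⟩ := cL.exists_maximal hne
        exact ⟨m, hm.1, fun w hw hlt => hlt.not_ge (hm.2 hw hlt.le)⟩
      have hmc : m ∈ c := (Finset.mem_filter.1 hm).1
      refine ⟨m, (Finset.mem_filter.1 hm).2, fun w hw => ?_, Or.inr hmc⟩
      by_cases hwm : w = m
      · exact le_of_eq hwm
      rcases hc (Finset.mem_filter.1 hw).1 hmc hwm with h | h
      · exact h
      · exact absurd (lt_of_le_of_ne h (Ne.symm hwm)) (hmax w hw)
  have hhigh : ∃ y₀, r < P.rank y₀ ∧ (∀ w ∈ cU, y₀ ≤ w) ∧ (y₀ = P.top ∨ y₀ ∈ c) := by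
    rcases Finset.eq_empty_or_nonempty cU with he | hne
    · exact ⟨P.top, hrtop, by simp [he], Or.inl rfl⟩
    · obtain ⟨m, hm, hmin⟩ : ∃ m ∈ cU, ∀ w ∈ cU, ¬ w < m := by
        obtain ⟨m, hm⟩ := cU.exists_minimal hne
        exact ⟨m, hm.1, fun w hw hlt => hlt.not_ge (hm.2 hw hlt.le)⟩
      have hmc : m ∈ c := (Finset.mem_filter.1 hm).1
      refine ⟨m, (Finset.mem_filter.1 hm).2, fun w hw => ?_, Or.inr hmc⟩
      by_cases hwm : w = m
      · exact le_of_eq hwm.symm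
      rcases hc hmc (Finset.mem_filter.1 hw).1 (fun h => hwm h.symm) with h | h
      · exact h
      · exact absurd (lt_of_le_of_ne h (fun h' => hwm h')) (hmin w hw)
  obtain ⟨x₀, hx1, hx2, hx3⟩ := hlow
  obtain ⟨y₀, hy1, hy2, hy3⟩ := hhigh
  have hxy : x₀ ≤ y₀ := by
    rcases hx3 with rfl | hx3
    · exact P.bot_le _
    rcases hy3 with rfl | hy3
    · exact P.le_top _
    by_cases hxyeq : x₀ = y₀
    · exact le_of_eq hxyeq
    rcases hc hx3 hy3 hxyeq with h | h
    · exact h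
    · exact absurd (P.rank_le_of_le h) (by omega)
  obtain ⟨z, hz1, hz2, hz3⟩ := P.exists_rank_between (r - P.rank x₀) r hxy (by omega) (by omega)
  have hznotc : z ∉ c := fun hz => hrne z hz hz3
  refine ⟨z, hznotc, ?_, hz3⟩
  intro a ha b hb hab
  simp only [Finset.coe_insert, Set.mem_insert_iff] at ha hb
  have key : ∀ w ∈ c, z ≤ w ∨ w ≤ z := by
    intro w hw
    rcases hsplit w hw with h | h
    · exact Or.inr (le_trans (hx2 w h) hz1)
    · exact Or.inl (le_trans hz2 (hy2 w h))
  rcases ha with rfl | ha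
  · rcases hb with rfl | hb
    · exact absurd rfl hab
    · rcases key b hb with h | h
      · exact Or.inl h
      · exact Or.inr h
  · rcases hb with rfl | hb
    · rcases key a ha with h | h
      · exact Or.inr h
      · exact Or.inl h
    · exact hc ha hb hab

/-- Chain extension to any larger rank set inside `[1, rank top - 1]`. -/
lemma chain_extend [DecidableEq P.carrier] (hr : 1 ≤ P.rank P.top) :
    ∀ (k : ℕ) (c : Finset P.carrier) (T : Finset ℕ),
    IsChain (· ≤ ·) (↑c : Set P.carrier) → c.image P.rank ⊆ T →
    T ⊆ Finset.Icc 1 (P.rank P.top - 1) → (T \ c.image P.rank).card = k →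
    ∃ d, c ⊆ d ∧ IsChain (· ≤ ·) (↑d : Set P.carrier) ∧ d.image P.rank = T := by
  intro k
  induction k with
  | zero =>
    intro c T hc hsub hT hcard
    refine ⟨c, Finset.Subset.refl c, hc, ?_⟩
    have := Finset.sdiff_eq_empty_iff_subset.1 (Finset.card_eq_zero.1 hcard)
    exact Finset.Subset.antisymm hsub this
  | succ k ih =>
    intro c T hc hsub hT hcard
    have hne : (T \ c.image P.rank).Nonempty := by
      rw [← Finset.card_pos, hcard]; omega
    obtain ⟨r, hrmem⟩ := hne
    have hrT : r ∈ T := (Finset.mem_sdiff.1 hrmem).1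
    have hrnot : r ∉ c.image P.rank := (Finset.mem_sdiff.1 hrmem).2
    have hr1 : 1 ≤ r := (Finset.mem_Icc.1 (hT hrT)).1
    have hr2 : r ≤ P.rank P.top - 1 := (Finset.mem_Icc.1 (hT hrT)).2
    obtain ⟨z, hz1, hz2, hz3⟩ := P.chain_insert hr hc hr1 hr2 hrnot
    have himg : (insert z c).image P.rank = insert r (c.image P.rank) := by
      rw [Finset.image_insert, hz3]
    have hsub' : (insert z c).image P.rank ⊆ T := by
      rw [himg]; exact Finset.insert_subset hrT hsub
    have hcard' : (T \ (insert z c).image P.rank).card = k := by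
      rw [himg]
      have : T \ insert r (c.image P.rank) = (T \ c.image P.rank).erase r := by
        ext a; simp [Finset.mem_sdiff, Finset.mem_erase, Finset.mem_insert]; tauto
      rw [this, Finset.card_erase_of_mem hrmem, hcard]; omega
    obtain ⟨d, hd1, hd2, hd3⟩ := ih (insert z c) T hz2 hsub' hT hcard'
    exact ⟨d, Finset.Subset.trans (Finset.subset_insert z c) hd1, hd2, hd3⟩

end GradedPoset

namespace GradedPoset
variable (P : GradedPoset)

lemma flagNum_mono (hr : 1 ≤ P.rank P.top) {S T : Finset ℕ} (hST : S ⊆ T)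
    (hT : T ⊆ Finset.Icc 1 (P.rank P.top - 1)) : flagNum P S ≤ flagNum P T := by
  classical
  set CS := {c : Finset P.carrier | IsChain (· ≤ ·) (↑c : Set P.carrier) ∧ c.image P.rank = S}
  set CT := {c : Finset P.carrier | IsChain (· ≤ ·) (↑c : Set P.carrier) ∧ c.image P.rank = T}
  have hext : ∀ c ∈ CS, ∃ d, c ⊆ d ∧ IsChain (· ≤ ·) (↑d : Set P.carrier) ∧ d.image P.rank = T := by
    intro c hc
    exact P.chain_extend hr _ c T hc.1 (hc.2 ▸ hST) hT rfl
  set f : Finset P.carrier → Finset P.carrier :=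
    fun c => if h : c ∈ CS then (hext c h).choose else ∅ with hf
  have hmapsto : ∀ c ∈ CS, f c ∈ CT := by
    intro c hc
    simp only [hf, dif_pos hc]
    exact ⟨(hext c hc).choose_spec.2.1, (hext c hc).choose_spec.2.2⟩
  have hrec : ∀ c ∈ CS, (f c).filter (fun x => P.rank x ∈ S) = c := by
    intro c hc
    obtain ⟨hcc, hdchain, hdimg⟩ : c ⊆ f c ∧ IsChain (· ≤ ·) (↑(f c) : Set P.carrier)
        ∧ (f c).image P.rank = T := by
      simp only [hf, dif_pos hc]
      exact (hext c hc).choose_spec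
    apply Finset.Subset.antisymm
    · intro x hx
      obtain ⟨hxd, hxS⟩ := Finset.mem_filter.1 hx
      rw [← hc.2] at hxS
      obtain ⟨y, hyc, hyr⟩ := Finset.mem_image.1 hxS
      have : y = x := P.chain_rank_inj hdchain (hcc hyc) hxd hyr
      exact this ▸ hyc
    · intro x hx
      refine Finset.mem_filter.2 ⟨hcc hx, ?_⟩
      rw [← hc.2]
      exact Finset.mem_image.2 ⟨x, hx, rfl⟩
  have hinj : Set.InjOn f CS := by
    intro c1 h1 c2 h2 heq
    rw [← hrec c1 h1, ← hrec c2 h2, heq]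
  exact Set.ncard_le_ncard_of_injOn f hmapsto hinj (Set.toFinite _)

lemma flagNum_nonneg (S : Finset ℕ) : (0:ℝ) ≤ (flagNum P S : ℝ) := Nat.cast_nonneg _

end GradedPoset


section BH
variable (n N : ℕ) (ℐ : Finset (Finset ℕ))

/-- Carrier of the Billera–Hetyei poset: a rank in `[0, n+1]` together with a choice of
branch for each interval containing that rank (normalized to `0` elsewhere). -/
def BHc : Type :=
  {p : Fin (n+2) × ({I // I ∈ ℐ} → Fin (N+1)) //
    ∀ I : {I // I ∈ ℐ}, (p.1 : ℕ) ∉ (I : Finset ℕ) → p.2 I = 0}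

instance : Fintype (BHc n N ℐ) := by
  unfold BHc; infer_instance

instance : PartialOrder (BHc n N ℐ) where
  le p q := (p.1.1 : ℕ) ≤ (q.1.1 : ℕ) ∧
    ∀ I : {I // I ∈ ℐ}, (p.1.1 : ℕ) ∈ (I : Finset ℕ) → (q.1.1 : ℕ) ∈ (I : Finset ℕ) →
      Finset.Icc (p.1.1 : ℕ) (q.1.1 : ℕ) ⊆ (I : Finset ℕ) → p.1.2 I = q.1.2 I
  le_refl p := ⟨le_refl _, fun I _ _ _ => rfl⟩
  le_trans p q r hpq hqr := by
    refine ⟨le_trans hpq.1 hqr.1, fun I hp hr hsub => ?_⟩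
    have hq : (q.1.1 : ℕ) ∈ (I : Finset ℕ) :=
      hsub (Finset.mem_Icc.2 ⟨hpq.1, hqr.1⟩)
    have h1 : Finset.Icc (p.1.1 : ℕ) (q.1.1 : ℕ) ⊆ (I : Finset ℕ) := by
      intro t ht
      have := Finset.mem_Icc.1 ht
      exact hsub (Finset.mem_Icc.2 ⟨this.1, le_trans this.2 hqr.1⟩)
    have h2 : Finset.Icc (q.1.1 : ℕ) (r.1.1 : ℕ) ⊆ (I : Finset ℕ) := by
      intro t ht
      have := Finset.mem_Icc.1 ht
      exact hsub (Finset.mem_Icc.2 ⟨le_trans hpq.1 this.1, this.2⟩)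
    exact (hpq.2 I hp hq h1).trans (hqr.2 I hq hr h2)
  le_antisymm p q hpq hqp := by
    have hval : (p.1.1 : ℕ) = (q.1.1 : ℕ) := le_antisymm hpq.1 hqp.1
    apply Subtype.ext
    apply Prod.ext
    · exact Fin.ext hval
    · funext I
      by_cases hI : (p.1.1 : ℕ) ∈ (I : Finset ℕ)
      · refine hpq.2 I hI (by rw [← hval]; exact hI) ?_
        rw [hval, Finset.Icc_self, Finset.singleton_subset_iff, ← hval]
        exact hI
      · rw [p.2 I hI, q.2 I (by rw [← hval]; exact hI)]

lemma BHc_le_iff (p q : BHc n N ℐ) : p ≤ q ↔ ((p.1.1 : ℕ) ≤ (q.1.1 : ℕ) ∧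
    ∀ I : {I // I ∈ ℐ}, (p.1.1 : ℕ) ∈ (I : Finset ℕ) → (q.1.1 : ℕ) ∈ (I : Finset ℕ) →
      Finset.Icc (p.1.1 : ℕ) (q.1.1 : ℕ) ⊆ (I : Finset ℕ) → p.1.2 I = q.1.2 I) :=
  Iff.rfl

lemma BHc_eq_of_le_of_rank_eq {p q : BHc n N ℐ} (h : p ≤ q)
    (hr : (p.1.1 : ℕ) = (q.1.1 : ℕ)) : p = q := by
  apply Subtype.ext
  apply Prod.ext
  · exact Fin.ext hr
  · funext I
    by_cases hI : (p.1.1 : ℕ) ∈ (I : Finset ℕ)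
    · refine h.2 I hI (by rw [← hr]; exact hI) ?_
      rw [hr, Finset.Icc_self, Finset.singleton_subset_iff, ← hr]
      exact hI
    · rw [p.2 I hI, q.2 I (by rw [← hr]; exact hI)]

lemma BHc_rank_lt_of_lt {p q : BHc n N ℐ} (h : p < q) : (p.1.1 : ℕ) < (q.1.1 : ℕ) := by
  rcases lt_or_eq_of_le h.le.1 with h' | h'
  · exact h'
  · exact absurd (BHc_eq_of_le_of_rank_eq n N ℐ h.le h') h.ne

/-- The Billera–Hetyei graded poset associated to an interval system. -/
def BH (h0 : ∀ I ∈ ℐ, I ⊆ Finset.Icc 1 n) : GradedPoset where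
  carrier := BHc n N ℐ
  bot := ⟨(⟨0, by omega⟩, fun _ => 0), fun _ _ => rfl⟩
  top := ⟨(⟨n+1, by omega⟩, fun _ => 0), fun _ _ => rfl⟩
  bot_le x := by
    refine ⟨Nat.zero_le _, fun I hI _ _ => ?_⟩
    have h0I : (0 : ℕ) ∈ (I : Finset ℕ) := hI
    exact absurd (Finset.mem_Icc.1 (h0 I I.2 h0I)).1 (by omega)
  le_top x := by
    refine ⟨?_, fun I _ hI _ => ?_⟩
    · show (x.1.1 : ℕ) ≤ n + 1
      have := x.1.1.2
      omega
    · have hI' : (n+1 : ℕ) ∈ (I : Finset ℕ) := hI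
      exact absurd (Finset.mem_Icc.1 (h0 I I.2 hI')).2 (by omega)
  rank p := (p.1.1 : ℕ)
  rank_bot := rfl
  rank_covBy x y hcov := by
    show (y.1.1 : ℕ) = (x.1.1 : ℕ) + 1
    have hlt : (x.1.1 : ℕ) < (y.1.1 : ℕ) := BHc_rank_lt_of_lt n N ℐ hcov.lt
    by_contra hne
    have hlt2 : (x.1.1 : ℕ) + 1 < (y.1.1 : ℕ) := by omega
    set i : ℕ := (x.1.1 : ℕ) with hi
    set j : ℕ := (y.1.1 : ℕ) with hj
    have hjbound : j < n + 2 := y.1.1.2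
    set z : BHc n N ℐ := ⟨(⟨i+1, by omega⟩, fun I =>
      if (i+1 : ℕ) ∈ (I : Finset ℕ) then
        (if (i : ℕ) ∈ (I : Finset ℕ) then x.1.2 I else y.1.2 I) else 0),
      fun I hI => if_neg hI⟩ with hzdef
    have hzrank : (z.1.1 : ℕ) = i + 1 := rfl
    have hzval : ∀ I : {I // I ∈ ℐ}, z.1.2 I =
        if (i+1 : ℕ) ∈ (I : Finset ℕ) then
          (if (i : ℕ) ∈ (I : Finset ℕ) then x.1.2 I else y.1.2 I) else 0 :=
      fun I => rfl
    have hxz : x ≤ z := by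
      refine ⟨by rw [hzrank]; omega, fun I h1 h2 _ => ?_⟩
      rw [hzval I]
      rw [hzrank] at h2
      rw [if_pos h2, if_pos h1]
    have hzy : z ≤ y := by
      refine ⟨by rw [hzrank]; omega, fun I h1 h2 hsub => ?_⟩
      rw [hzval I]
      rw [hzrank] at h1 hsub
      rw [if_pos h1]
      by_cases hiI : (i : ℕ) ∈ (I : Finset ℕ)
      · rw [if_pos hiI]
        refine hcov.lt.le.2 I hiI h2 ?_
        intro t ht
        have htt := Finset.mem_Icc.1 ht
        rcases Nat.eq_or_lt_of_le htt.1 with h | h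
        · rw [← h]; exact hiI
        · exact hsub (Finset.mem_Icc.2 ⟨by omega, htt.2⟩)
      · rw [if_neg hiI]
    have hxzlt : x < z := by
      refine lt_of_le_of_ne hxz (fun h => ?_)
      have : (x.1.1 : ℕ) = (z.1.1 : ℕ) := by rw [h]
      rw [hzrank] at this
      omega
    have hzylt : z < y := by
      refine lt_of_le_of_ne hzy (fun h => ?_)
      have : (z.1.1 : ℕ) = (y.1.1 : ℕ) := by rw [h]
      rw [hzrank] at this
      omega
    exact hcov.2 hxzlt hzylt

lemma BH_rank_top (h0 : ∀ I ∈ ℐ, I ⊆ Finset.Icc 1 n) :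
    (BH n N ℐ h0).rank (BH n N ℐ h0).top = n + 1 := rfl

end BH


/-- Functions vanishing outside `p` are equivalent to functions on `{i // p i}`. -/
def restrictEquiv {ι : Type*} (p : ι → Prop) [DecidablePred p] (M : Type*) [Zero M] :
    {h : ι → M // ∀ i, ¬ p i → h i = 0} ≃ ({i // p i} → M) where
  toFun h i := h.1 i.1
  invFun g := ⟨fun i => if hp : p i then g ⟨i, hp⟩ else 0, fun i hi => dif_neg hi⟩
  left_inv h := by
    ext i
    by_cases hp : p i
    · simp [hp]
    · simp [hp, h.2 i hp]
  right_inv g := by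
    ext i
    obtain ⟨i, hi⟩ := i
    simp [hi]

section BHcount
variable {n N : ℕ} {ℐ : Finset (Finset ℕ)}

lemma BH_flagNum (h0 : ∀ I ∈ ℐ, I ⊆ Finset.Icc 1 n)
    (hconv : ∀ I ∈ ℐ, ∀ a b t : ℕ, a ∈ I → b ∈ I → a ≤ t → t ≤ b → t ∈ I)
    (S : Finset ℕ) (hS : S ⊆ Finset.Icc 1 n) :
    flagNum (BH n N ℐ h0) S
      = (N+1) ^ (ℐ.filter (fun I => (S ∩ I).Nonempty)).card := by
  classical
  have hbound : ∀ i ∈ S, i < n + 2 := by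
    intro i hi
    have := Finset.mem_Icc.1 (hS hi)
    omega
  set mk : ({I // I ∈ ℐ} → Fin (N+1)) → {i // i ∈ S} → BHc n N ℐ :=
    fun h i => ⟨(⟨i.1, hbound i.1 i.2⟩, fun I =>
      if (i.1 : ℕ) ∈ (I : Finset ℕ) then h I else 0), fun I hI => if_neg hI⟩ with hmk
  have hmkrank : ∀ h i, ((mk h i).1.1 : ℕ) = i.1 := fun _ _ => rfl
  have hmkval : ∀ h i I, (mk h i).1.2 I =
      if (i.1 : ℕ) ∈ (I : Finset ℕ) then h I else 0 := fun _ _ _ => rfl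
  set F : ({I // I ∈ ℐ} → Fin (N+1)) → Finset (BHc n N ℐ) :=
    fun h => S.attach.image (mk h) with hF
  set A : Set ({I // I ∈ ℐ} → Fin (N+1)) :=
    {h | ∀ I : {I // I ∈ ℐ}, ¬ (S ∩ (I : Finset ℕ)).Nonempty → h I = 0} with hA
  set CS : Set (Finset (BHc n N ℐ)) :=
    {c | IsChain (· ≤ ·) (↑c : Set (BHc n N ℐ)) ∧
      c.image (fun p : BHc n N ℐ => (p.1.1 : ℕ)) = S} with hCS
  have hflag : flagNum (BH n N ℐ h0) S = CS.ncard := rfl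
  -- `F` maps `A` into `CS`
  have hmaps : ∀ h, F h ∈ CS := by
    intro h
    constructor
    · intro a ha b hb hab
      simp only [hF, Finset.coe_image, Set.mem_image, Finset.mem_coe,
        Finset.mem_attach, true_and] at ha hb
      obtain ⟨i, _, rfl⟩ := ha
      obtain ⟨i', _, rfl⟩ := hb
      rcases le_total (i.1 : ℕ) (i'.1 : ℕ) with hle | hle
      · left
        refine ⟨hle, fun I h1 h2 _ => ?_⟩
        rw [hmkval, hmkval, if_pos h1, if_pos h2]
      · right
        refine ⟨hle, fun I h1 h2 _ => ?_⟩
        rw [hmkval, hmkval, if_pos h1, if_pos h2]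
    · rw [hF]
      rw [Finset.image_image]
      have : ((fun p : BHc n N ℐ => (p.1.1 : ℕ)) ∘ mk h) = fun i : {i // i ∈ S} => i.1 := by
        funext i
        rfl
      rw [this]
      exact Finset.attach_image_val
  -- `F` is injective on `A`
  have hinj : Set.InjOn F A := by
    intro h1 hA1 h2 hA2 heq
    funext I
    by_cases hne : (S ∩ (I : Finset ℕ)).Nonempty
    · obtain ⟨i, hi⟩ := hne
      have hiS : i ∈ S := (Finset.mem_inter.1 hi).1
      have hiI : i ∈ (I : Finset ℕ) := (Finset.mem_inter.1 hi).2
      have hmem : mk h1 ⟨i, hiS⟩ ∈ F h2 := by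
        rw [← heq, hF]
        exact Finset.mem_image.2 ⟨⟨i, hiS⟩, Finset.mem_attach _ _, rfl⟩
      rw [hF] at hmem
      obtain ⟨i', _, heq'⟩ := Finset.mem_image.1 hmem
      have hii' : (i'.1 : ℕ) = i := by
        have := congrArg (fun p : BHc n N ℐ => (p.1.1 : ℕ)) heq'
        simpa [hmkrank] using this
      have := congrArg (fun p : BHc n N ℐ => p.1.2 I) heq'
      simp only [hmkval] at this
      rw [hii'] at this
      rw [if_pos hiI, if_pos hiI] at this
      exact this.symm
    · rw [hA1 I hne, hA2 I hne]
  -- `F` is surjective from `A` onto `CS`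
  have hsurj : ∀ c ∈ CS, ∃ h ∈ A, F h = c := by
    intro c hc
    obtain ⟨hchain, himg⟩ := hc
    have key : ∀ x ∈ c, ∀ y ∈ c, ∀ I : {I // I ∈ ℐ},
        ((x : BHc n N ℐ).1.1 : ℕ) ∈ (I : Finset ℕ) → ((y : BHc n N ℐ).1.1 : ℕ) ∈ (I : Finset ℕ) →
        x.1.2 I = y.1.2 I := by
      intro x hx y hy I hxI hyI
      by_cases hxy : x = y
      · rw [hxy]
      rcases hchain hx hy hxy with hle | hle
      · refine hle.2 I hxI hyI ?_
        intro t ht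
        have htt := Finset.mem_Icc.1 ht
        exact hconv I I.2 _ _ t hxI hyI htt.1 htt.2
      · refine (hle.2 I hyI hxI ?_).symm
        intro t ht
        have htt := Finset.mem_Icc.1 ht
        exact hconv I I.2 _ _ t hyI hxI htt.1 htt.2
    set h : {I // I ∈ ℐ} → Fin (N+1) := fun I =>
      if hx : ∃ x, x ∈ c ∧ ((x : BHc n N ℐ).1.1 : ℕ) ∈ (I : Finset ℕ)
      then hx.choose.1.2 I else 0 with hh
    have hhval : ∀ I : {I // I ∈ ℐ}, h I =
        if hx : ∃ x, x ∈ c ∧ ((x : BHc n N ℐ).1.1 : ℕ) ∈ (I : Finset ℕ)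
        then hx.choose.1.2 I else 0 := fun _ => rfl
    have hhA : h ∈ A := by
      intro I hne
      rw [hhval]
      refine dif_neg ?_
      rintro ⟨x, hx, hxI⟩
      refine hne ⟨(x.1.1 : ℕ), Finset.mem_inter.2 ⟨?_, hxI⟩⟩
      rw [← himg]
      exact Finset.mem_image.2 ⟨x, hx, rfl⟩
    have hxmk : ∀ x (hx : x ∈ c) (hxS : ((x : BHc n N ℐ).1.1 : ℕ) ∈ S),
        x = mk h ⟨(x.1.1 : ℕ), hxS⟩ := by
      intro x hx hxS
      apply Subtype.ext
      apply Prod.ext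
      · exact Fin.ext rfl
      · funext I
        rw [hmkval]
        by_cases hI : ((x : BHc n N ℐ).1.1 : ℕ) ∈ (I : Finset ℕ)
        · rw [if_pos hI, hhval]
          have hex : ∃ y, y ∈ c ∧ ((y : BHc n N ℐ).1.1 : ℕ) ∈ (I : Finset ℕ) := ⟨x, hx, hI⟩
          rw [dif_pos hex]
          exact key x hx hex.choose hex.choose_spec.1 I hI hex.choose_spec.2
        · rw [if_neg hI]
          exact x.2 I hI
    refine ⟨h, hhA, ?_⟩
    ext d
    constructor
    · intro hd
      rw [hF] at hd
      obtain ⟨i, _, rfl⟩ := Finset.mem_image.1 hd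
      have hiS : (i.1 : ℕ) ∈ c.image (fun p : BHc n N ℐ => (p.1.1 : ℕ)) := by
        rw [himg]; exact i.2
      obtain ⟨x, hxc, hxr⟩ := Finset.mem_image.1 hiS
      have hxS : ((x : BHc n N ℐ).1.1 : ℕ) ∈ S := by rw [hxr]; exact i.2
      have := hxmk x hxc hxS
      have hieq : mk h ⟨(x.1.1 : ℕ), hxS⟩ = mk h i := by
        congr 1
        exact Subtype.ext hxr
      rw [← hieq, ← this]
      exact hxc
    · intro hd
      have hdS : ((d : BHc n N ℐ).1.1 : ℕ) ∈ S := by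
        rw [← himg]
        exact Finset.mem_image.2 ⟨d, hd, rfl⟩
      rw [hxmk d hd hdS, hF]
      exact Finset.mem_image.2 ⟨⟨_, hdS⟩, Finset.mem_attach _ _, rfl⟩
  -- conclude: `CS = F '' A` and use injectivity
  have himgeq : CS = F '' A := by
    apply Set.eq_of_subset_of_subset
    · intro c hc
      obtain ⟨h, hhA, hFh⟩ := hsurj c hc
      exact ⟨h, hhA, hFh⟩
    · rintro _ ⟨h, _, rfl⟩
      exact hmaps h
  rw [hflag, himgeq, Set.ncard_image_of_injOn hinj]
  -- compute the cardinality of `A`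
  rw [← Nat.card_coe_set_eq]
  have e : ↥A ≃ ({I : {I // I ∈ ℐ} // (S ∩ (I : Finset ℕ)).Nonempty} → Fin (N+1)) :=
    (Equiv.setCongr rfl).trans
      (restrictEquiv (fun I : {I // I ∈ ℐ} => (S ∩ (I : Finset ℕ)).Nonempty) (Fin (N+1)))
  rw [Nat.card_congr e, Nat.card_eq_fintype_card, Fintype.card_fun, Fintype.card_fin]
  congr 1
  rw [Fintype.card_subtype]
  refine Finset.card_bij (fun I _ => I.1) ?_ ?_ ?_
  · intro I hI
    simp only [Finset.mem_filter, Finset.mem_univ, true_and] at hI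
    exact Finset.mem_filter.2 ⟨I.2, hI⟩
  · intro I hI J hJ hIJ
    exact Subtype.ext hIJ
  · intro J hJ
    obtain ⟨hJℐ, hJne⟩ := Finset.mem_filter.1 hJ
    exact ⟨⟨J, hJℐ⟩, by simpa using hJne, rfl⟩

end BHcount

/-- The cone `K_r` of all linear inequalities valid on flag `f`-vectors of graded posets
of rank `r`, modelled inside `Finset ℕ → ℝ` as the functions supported on subsets of
`{1,…,r-1}` whose associated functional is nonnegative on all graded posets of rank `r`. -/
def coneK (r : ℕ) : Set (Finset ℕ → ℝ) :=
  {a | (∀ S : Finset ℕ, ¬ S ⊆ Finset.Icc 1 (r - 1) → a S = 0) ∧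
    ∀ P : GradedPoset, P.rank P.top = r →
      0 ≤ ∑ S ∈ (Finset.Icc 1 (r - 1)).powerset, a S * (flagNum P S : ℝ)}

section eps
variable {n : ℕ} {ℐ : Finset (Finset ℕ)}

lemma eps_nonneg (hℐ : ∀ I ∈ ℐ, ∃ p q : ℕ, 1 ≤ p ∧ p ≤ q ∧ q ≤ n ∧ I = Finset.Icc p q)
    {a : Finset ℕ → ℝ} (ha : a ∈ coneK (n + 1)) :
    0 ≤ ∑ S ∈ (Finset.Icc 1 n).powerset.filter
        (fun S => ∀ I ∈ ℐ, (S ∩ I).Nonempty), a S := by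
  classical
  have h0 : ∀ I ∈ ℐ, I ⊆ Finset.Icc 1 n := by
    intro I hI
    obtain ⟨p, q, h1, h2, h3, rfl⟩ := hℐ I hI
    intro t ht
    have := Finset.mem_Icc.1 ht
    exact Finset.mem_Icc.2 ⟨by omega, by omega⟩
  have hconv : ∀ I ∈ ℐ, ∀ a b t : ℕ, a ∈ I → b ∈ I → a ≤ t → t ≤ b → t ∈ I := by
    intro I hI x y t hx hy h1 h2
    obtain ⟨p, q, _, _, _, rfl⟩ := hℐ I hI
    have := Finset.mem_Icc.1 hx
    have := Finset.mem_Icc.1 hy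
    exact Finset.mem_Icc.2 ⟨by omega, by omega⟩
  set m : Finset ℕ → ℕ := fun S => (ℐ.filter (fun I => (S ∩ I).Nonempty)).card with hm
  set k : ℕ := ℐ.card with hk
  have hmle : ∀ S, m S ≤ k := fun S => Finset.card_le_card (Finset.filter_subset _ _)
  have hmk_iff : ∀ S, m S = k ↔ (∀ I ∈ ℐ, (S ∩ I).Nonempty) := by
    intro S
    constructor
    · intro h I hI
      have : ℐ.filter (fun I => (S ∩ I).Nonempty) = ℐ :=
        Finset.eq_of_subset_of_card_le (Finset.filter_subset _ _) (le_of_eq h.symm)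
      rw [← this] at hI
      exact (Finset.mem_filter.1 hI).2
    · intro h
      show (ℐ.filter (fun I => (S ∩ I).Nonempty)).card = ℐ.card
      rw [Finset.filter_true_of_mem h]
  -- nonnegativity for every N
  have hsum : ∀ N : ℕ, 0 ≤ ∑ S ∈ (Finset.Icc 1 n).powerset,
      a S * ((N+1 : ℝ) ^ (m S)) := by
    intro N
    have := ha.2 (BH n N ℐ h0) (BH_rank_top n N ℐ h0)
    simp only [Nat.add_sub_cancel] at this
    refine le_trans this (le_of_eq ?_)
    refine Finset.sum_congr rfl (fun S hS => ?_)
    rw [BH_flagNum h0 hconv S (Finset.mem_powerset.1 hS)]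
    push_cast
    ring_nf
    rfl
  -- pass to the limit
  set L : ℝ := ∑ S ∈ (Finset.Icc 1 n).powerset.filter (fun S => ∀ I ∈ ℐ, (S ∩ I).Nonempty), a S
    with hL
  have hNlim : Filter.Tendsto (fun N : ℕ => ((N : ℝ) + 1)) Filter.atTop Filter.atTop :=
    Filter.tendsto_atTop_add_const_right _ 1 tendsto_natCast_atTop_atTop
  have hterm : ∀ S ∈ (Finset.Icc 1 n).powerset,
      Filter.Tendsto (fun N : ℕ => a S * (((N:ℝ)+1) ^ (m S) / ((N:ℝ)+1) ^ k))
        Filter.atTop (nhds (a S * (if m S = k then 1 else 0))) := by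
    intro S _
    by_cases hSk : m S = k
    · rw [if_pos hSk, hSk]
      have : (fun N : ℕ => a S * (((N:ℝ)+1) ^ k / ((N:ℝ)+1) ^ k)) = fun N : ℕ => a S := by
        funext N
        rw [div_self (pow_ne_zero _ (by positivity)), mul_one]
      rw [this, mul_one]
      exact tendsto_const_nhds
    · rw [if_neg hSk]
      have hlt : m S < k := lt_of_le_of_ne (hmle S) hSk
      have heq : (fun N : ℕ => a S * (((N:ℝ)+1) ^ (m S) / ((N:ℝ)+1) ^ k))
          = fun N : ℕ => a S * ((((N:ℝ)+1) ^ (k - m S))⁻¹) := by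
        funext N
        congr 1
        rw [inv_eq_one_div, div_eq_div_iff (by positivity) (by positivity), one_mul,
          ← pow_add]
        congr 1
        omega
      rw [heq]
      have : Filter.Tendsto (fun N : ℕ => (((N:ℝ)+1) ^ (k - m S))⁻¹) Filter.atTop (nhds 0) :=
        Filter.Tendsto.inv_tendsto_atTop ((Filter.tendsto_pow_atTop (by omega)).comp hNlim)
      simpa using this.const_mul (a S)
  have hlim : Filter.Tendsto (fun N : ℕ =>
      (∑ S ∈ (Finset.Icc 1 n).powerset, a S * ((N+1 : ℝ) ^ (m S))) / ((N:ℝ)+1) ^ k)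
      Filter.atTop (nhds L) := by
    have h1 : ∀ N : ℕ, (∑ S ∈ (Finset.Icc 1 n).powerset, a S * ((N+1 : ℝ) ^ (m S)))
        / ((N:ℝ)+1) ^ k
        = ∑ S ∈ (Finset.Icc 1 n).powerset, a S * (((N:ℝ)+1) ^ (m S) / ((N:ℝ)+1) ^ k) := by
      intro N
      rw [Finset.sum_div]
      exact Finset.sum_congr rfl (fun S _ => by ring)
    simp only [h1]
    have h2 : L = ∑ S ∈ (Finset.Icc 1 n).powerset, a S * (if m S = k then 1 else 0) := by
      rw [hL]
      rw [Finset.sum_filter]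
      refine Finset.sum_congr rfl (fun S _ => ?_)
      rw [mul_ite, mul_one, mul_zero]
      congr 1
      · simp [hmk_iff S]
    rw [h2]
    exact tendsto_finset_sum _ hterm
  refine ge_of_tendsto' hlim (fun N => ?_)
  exact div_nonneg (hsum N) (by positivity)
end eps


section basisvec
variable {n : ℕ}

/-- The standard basis vector supported on `S`. -/
def bvec (S : Finset ℕ) : Finset ℕ → ℝ := fun S' => if S' = S then 1 else 0

lemma bvec_mem_coneK {S : Finset ℕ} (hS : S ⊆ Finset.Icc 1 n) :
    bvec S ∈ coneK (n + 1) := by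
  constructor
  · intro S' hS'
    simp only [Nat.add_sub_cancel] at hS'
    have : S' ≠ S := fun h => hS' (h ▸ hS)
    simp [bvec, this]
  · intro P hP
    simp only [Nat.add_sub_cancel]
    have : ∀ S' ∈ (Finset.Icc 1 n).powerset, bvec S S' * (flagNum P S' : ℝ)
        = if S' = S then (flagNum P S' : ℝ) else 0 := by
      intro S' _
      simp only [bvec, ite_mul, one_mul, zero_mul]
    rw [Finset.sum_congr rfl this]
    rw [Finset.sum_ite_eq' (Finset.Icc 1 n).powerset S (fun S' => (flagNum P S' : ℝ))]
    split
    · exact Nat.cast_nonneg _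
    · exact le_refl 0

lemma bvec_diff_mem_coneK {S : Finset ℕ} (hS : S ⊆ Finset.Icc 1 n) :
    (bvec (Finset.Icc 1 n) - bvec S) ∈ coneK (n + 1) := by
  constructor
  · intro S' hS'
    simp only [Nat.add_sub_cancel] at hS'
    have h1 : S' ≠ S := fun h => hS' (h ▸ hS)
    have h2 : S' ≠ Finset.Icc 1 n := fun h => hS' (h ▸ (Finset.Subset.refl _))
    simp [bvec, h1, h2]
  · intro P hP
    simp only [Nat.add_sub_cancel]
    have hexp : ∀ S' ∈ (Finset.Icc 1 n).powerset,
        (bvec (Finset.Icc 1 n) - bvec S) S' * (flagNum P S' : ℝ)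
        = (if S' = Finset.Icc 1 n then (flagNum P S' : ℝ) else 0)
          - (if S' = S then (flagNum P S' : ℝ) else 0) := by
      intro S' _
      simp only [bvec, Pi.sub_apply, ite_mul, one_mul, zero_mul, sub_mul]
    rw [Finset.sum_congr rfl hexp, Finset.sum_sub_distrib,
      Finset.sum_ite_eq' (Finset.Icc 1 n).powerset (Finset.Icc 1 n)
        (fun S' => (flagNum P S' : ℝ)),
      Finset.sum_ite_eq' (Finset.Icc 1 n).powerset S (fun S' => (flagNum P S' : ℝ))]
    rw [if_pos (Finset.mem_powerset.2 (Finset.Subset.refl _)), if_pos (Finset.mem_powerset.2 hS)]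
    rw [sub_nonneg]
    have := P.flagNum_mono (by omega : 1 ≤ P.rank P.top) hS
      (by rw [hP]; simp only [Nat.add_sub_cancel]; exact Finset.Subset.refl _)
    exact_mod_cast this
end basisvec

/-- The subspace of `Finset ℕ → ℝ` of vectors supported on subsets of `{1,…,n}`,
a copy of `ℝ^{2^n}`. -/
def supportedSpace (n : ℕ) : Submodule ℝ (Finset ℕ → ℝ) where
  carrier := {a | ∀ S : Finset ℕ, ¬ S ⊆ Finset.Icc 1 n → a S = 0}
  add_mem' := by
    intro a b ha hb S hS
    simp only [Pi.add_apply, ha S hS, hb S hS, add_zero]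
  zero_mem' := by intro S hS; rfl
  smul_mem' := by
    intro c a ha S hS
    simp only [Pi.smul_apply, ha S hS, smul_zero]

lemma mem_supportedSpace {n : ℕ} {a : Finset ℕ → ℝ} :
    a ∈ supportedSpace n ↔ ∀ S : Finset ℕ, ¬ S ⊆ Finset.Icc 1 n → a S = 0 := Iff.rfl

theorem stmt_3 (n : ℕ) (hn : 1 ≤ n) (ℐ : Finset (Finset ℕ))
    (hℐ : ∀ I ∈ ℐ, ∃ p q : ℕ, 1 ≤ p ∧ p ≤ q ∧ q ≤ n ∧ I = Finset.Icc p q) :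
    Submodule.span ℝ (coneK (n + 1)) = supportedSpace n ∧
    (∀ a ∈ coneK (n + 1),
        0 ≤ ∑ S ∈ (Finset.Icc 1 n).powerset.filter
              (fun S => ∀ I ∈ ℐ, (S ∩ I).Nonempty), a S) ∧
    Module.finrank ℝ
        (Submodule.span ℝ {a | a ∈ coneK (n + 1) ∧
          ∑ S ∈ (Finset.Icc 1 n).powerset.filter
              (fun S => ∀ I ∈ ℐ, (S ∩ I).Nonempty), a S = 0}) = 2 ^ n - 1 := by
  classical
  have hsum_apply : ∀ {ι : Type} (t : Finset ι) (f : ι → (Finset ℕ → ℝ)) (S₀ : Finset ℕ),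
      (∑ S ∈ t, f S) S₀ = ∑ S ∈ t, f S S₀ := by
    intro ι t f S₀
    rw [Finset.sum_apply]
  -- Part 1
  have part1 : Submodule.span ℝ (coneK (n + 1)) = supportedSpace n := by
    apply le_antisymm
    · rw [Submodule.span_le]
      intro a ha S hS
      exact ha.1 S (by simpa only [Nat.add_sub_cancel] using hS)
    · intro a ha
      have hdecomp : a = ∑ S ∈ (Finset.Icc 1 n).powerset, a S • bvec S := by
        funext S₀
        rw [hsum_apply]
        have : ∀ S ∈ (Finset.Icc 1 n).powerset, (a S • bvec S) S₀
            = if S₀ = S then a S else 0 := by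
          intro S _
          simp only [Pi.smul_apply, bvec, smul_eq_mul, mul_ite, mul_one, mul_zero]
        rw [Finset.sum_congr rfl this, Finset.sum_ite_eq (Finset.Icc 1 n).powerset S₀ a]
        by_cases hS₀ : S₀ ⊆ Finset.Icc 1 n
        · rw [if_pos (Finset.mem_powerset.2 hS₀)]
        · rw [if_neg (fun h => hS₀ (Finset.mem_powerset.1 h)), ha S₀ hS₀]
      rw [hdecomp]
      exact Submodule.sum_mem _ (fun S hS => Submodule.smul_mem _ _
        (Submodule.subset_span (bvec_mem_coneK (Finset.mem_powerset.1 hS))))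
  refine ⟨part1, fun a ha => eps_nonneg hℐ ha, ?_⟩
  -- Part 3
  set T : Finset ℕ := Finset.Icc 1 n with hTdef
  set Bl : Finset ℕ → Prop := fun S => ∀ I ∈ ℐ, (S ∩ I).Nonempty with hBl
  have hBlT : Bl T := by
    intro I hI
    obtain ⟨p, q, h1, h2, h3, rfl⟩ := hℐ I hI
    refine ⟨p, Finset.mem_inter.2 ⟨Finset.mem_Icc.2 ⟨h1, by omega⟩, Finset.mem_Icc.2 ⟨le_refl _, h2⟩⟩⟩
  set E : Finset (Finset ℕ) := T.powerset.erase T with hE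
  set u : Finset ℕ → (Finset ℕ → ℝ) :=
    fun S => if Bl S then bvec T - bvec S else bvec S with hu
  set Face : Set (Finset ℕ → ℝ) := {a | a ∈ coneK (n + 1) ∧
      ∑ S ∈ T.powerset.filter Bl, a S = 0} with hFace
  have hTmemfil : T ∈ T.powerset.filter Bl :=
    Finset.mem_filter.2 ⟨Finset.mem_powerset.2 (Finset.Subset.refl T), hBlT⟩
  -- values of u
  have hu_apply : ∀ S S₀ : Finset ℕ, u S S₀ =
      if Bl S then ((if S₀ = T then (1:ℝ) else 0) - (if S₀ = S then 1 else 0))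
      else (if S₀ = S then 1 else 0) := by
    intro S S₀
    show (if Bl S then bvec T - bvec S else bvec S) S₀ = _
    by_cases h : Bl S
    · rw [if_pos h, if_pos h]; rfl
    · rw [if_neg h, if_neg h]; rfl
  -- each u S lies in the face
  have huFace : ∀ S ∈ E, u S ∈ Face := by
    intro S hSE
    have hSsub : S ⊆ T := Finset.mem_powerset.1 (Finset.mem_of_mem_erase hSE)
    have hSne : S ≠ T := Finset.ne_of_mem_erase hSE
    constructor
    · show (if Bl S then bvec T - bvec S else bvec S) ∈ coneK (n + 1)
      by_cases h : Bl S
      · rw [if_pos h]; exact bvec_diff_mem_coneK hSsub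
      · rw [if_neg h]; exact bvec_mem_coneK hSsub
    · show ∑ S' ∈ T.powerset.filter Bl, u S S' = 0
      by_cases h : Bl S
      · have hcong : ∀ S' ∈ T.powerset.filter Bl, u S S' =
            (if S' = T then (1:ℝ) else 0) - (if S' = S then 1 else 0) := by
          intro S' _
          rw [hu_apply, if_pos h]
        rw [Finset.sum_congr rfl hcong, Finset.sum_sub_distrib,
          Finset.sum_ite_eq' (T.powerset.filter Bl) T (fun _ => (1:ℝ)),
          Finset.sum_ite_eq' (T.powerset.filter Bl) S (fun _ => (1:ℝ)),
          if_pos hTmemfil,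
          if_pos (Finset.mem_filter.2 ⟨Finset.mem_powerset.2 hSsub, h⟩)]
        ring
      · have hcong : ∀ S' ∈ T.powerset.filter Bl, u S S' =
            (if S' = S then (1:ℝ) else 0) := by
          intro S' _
          rw [hu_apply, if_neg h]
        rw [Finset.sum_congr rfl hcong,
          Finset.sum_ite_eq' (T.powerset.filter Bl) S (fun _ => (1:ℝ)),
          if_neg (fun hc => h (Finset.mem_filter.1 hc).2)]
  -- span of the face equals span of the `u` vectors
  have hspan : Submodule.span ℝ Face = Submodule.span ℝ (u '' ↑E) := by
    apply le_antisymm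
    · rw [Submodule.span_le]
      intro a haF
      have hsupp : ∀ S', ¬ S' ⊆ T → a S' = 0 := fun S' h =>
        haF.1.1 S' (by simpa only [Nat.add_sub_cancel] using h)
      have hface2 : ∑ S ∈ T.powerset.filter Bl, a S = 0 := haF.2
      have hEfil : E.filter Bl = (T.powerset.filter Bl).erase T := by
        rw [hE]
        ext S
        simp only [Finset.mem_filter, Finset.mem_erase]
        tauto
      have herase : ∑ S ∈ (T.powerset.filter Bl).erase T, a S = - a T := by
        have := Finset.add_sum_erase (T.powerset.filter Bl) a hTmemfil
        rw [hface2] at this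
        linarith
      have hdecomp : a = ∑ S ∈ E, (if Bl S then -a S else a S) • u S := by
        funext S₀
        rw [hsum_apply]
        by_cases hS₀T : S₀ = T
        · have hcong : ∀ S ∈ E, ((if Bl S then -a S else a S) • u S) S₀ =
              (if Bl S then -a S else 0) := by
            intro S hS
            have hSne : S₀ ≠ S := fun hc => (Finset.ne_of_mem_erase hS) (hc ▸ hS₀T)
            have e1 : (if S₀ = T then (1:ℝ) else 0) = 1 := if_pos hS₀T
            have e2 : (if S₀ = S then (1:ℝ) else 0) = 0 := if_neg hSne
            rw [Pi.smul_apply, smul_eq_mul, hu_apply, e1, e2]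
            by_cases h : Bl S
            · simp only [if_pos h]; ring
            · simp only [if_neg h]; ring
          rw [Finset.sum_congr rfl hcong, ← Finset.sum_filter, hEfil,
            Finset.sum_neg_distrib, herase, neg_neg, hS₀T]
        · by_cases hS₀sub : S₀ ⊆ T
          · have hS₀E : S₀ ∈ E := Finset.mem_erase.2 ⟨hS₀T, Finset.mem_powerset.2 hS₀sub⟩
            have hcong : ∀ S ∈ E, ((if Bl S then -a S else a S) • u S) S₀ =
                (if S₀ = S then a S else 0) := by
              intro S hS
              have e1 : (if S₀ = T then (1:ℝ) else 0) = 0 := if_neg hS₀T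
              rw [Pi.smul_apply, smul_eq_mul, hu_apply, e1]
              by_cases h : Bl S
              · by_cases h2 : S₀ = S
                · simp only [if_pos h, if_pos h2]; ring
                · simp only [if_pos h, if_neg h2]; ring
              · by_cases h2 : S₀ = S
                · simp only [if_neg h, if_pos h2]; ring
                · simp only [if_neg h, if_neg h2]; ring
            rw [Finset.sum_congr rfl hcong, Finset.sum_ite_eq E S₀ a, if_pos hS₀E]
          · have hcong : ∀ S ∈ E, ((if Bl S then -a S else a S) • u S) S₀ = 0 := by
              intro S hS
              have h1 : S₀ ≠ S := fun hc =>
                hS₀sub (hc ▸ Finset.mem_powerset.1 (Finset.mem_of_mem_erase hS))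
              have e1 : (if S₀ = T then (1:ℝ) else 0) = 0 := if_neg hS₀T
              have e2 : (if S₀ = S then (1:ℝ) else 0) = 0 := if_neg h1
              rw [Pi.smul_apply, smul_eq_mul, hu_apply, e1, e2]
              by_cases h : Bl S
              · simp only [if_pos h]; ring
              · simp only [if_neg h]; ring
            rw [Finset.sum_congr rfl hcong, Finset.sum_const_zero, hsupp S₀ hS₀sub]
      rw [hdecomp]
      exact Submodule.sum_mem _ (fun S hS => Submodule.smul_mem _ _
        (Submodule.subset_span ⟨S, hS, rfl⟩))
    · rw [Submodule.span_le]
      rintro _ ⟨S, hS, rfl⟩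
      exact Submodule.subset_span (huFace S hS)
  -- linear independence of the `u` vectors
  set v : {S // S ∈ E} → (Finset ℕ → ℝ) := fun S => u S.1 with hv
  have hvindep : LinearIndependent ℝ v := by
    rw [Fintype.linearIndependent_iff]
    intro g hg S₀
    have h0 := congrFun hg S₀.1
    rw [hsum_apply] at h0
    have hS₀T : S₀.1 ≠ T := Finset.ne_of_mem_erase S₀.2
    have hterm : ∀ i : {S // S ∈ E}, i ∈ Finset.univ → i ≠ S₀ →
        (g i • v i) S₀.1 = 0 := by
      intro i _ hi
      have h1 : S₀.1 ≠ i.1 := fun hc => hi (Subtype.ext hc.symm)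
      have e1 : (if S₀.1 = T then (1:ℝ) else 0) = 0 := if_neg hS₀T
      have e2 : (if S₀.1 = i.1 then (1:ℝ) else 0) = 0 := if_neg h1
      rw [Pi.smul_apply, smul_eq_mul, hv]
      show g i * u i.1 S₀.1 = 0
      rw [hu_apply, e1, e2]
      by_cases h : Bl i.1
      · simp only [if_pos h]; ring
      · simp only [if_neg h]; ring
    rw [Finset.sum_eq_single S₀ hterm (fun h => absurd (Finset.mem_univ S₀) h)] at h0
    have e1 : (if S₀.1 = T then (1:ℝ) else 0) = 0 := if_neg hS₀T
    have e2 : (if S₀.1 = S₀.1 then (1:ℝ) else 0) = 1 := if_pos rfl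
    rw [Pi.smul_apply, smul_eq_mul] at h0
    replace h0 : g S₀ * u S₀.1 S₀.1 = 0 := h0
    rw [hu_apply, e1, e2] at h0
    by_cases h : Bl S₀.1
    · rw [if_pos h] at h0; linarith
    · rw [if_neg h] at h0; linarith
  have hrange : Set.range v = u '' ↑E := by
    ext x
    constructor
    · rintro ⟨S, rfl⟩
      exact ⟨S.1, S.2, rfl⟩
    · rintro ⟨S, hS, rfl⟩
      exact ⟨⟨S, hS⟩, rfl⟩
  have hfr := finrank_span_eq_card hvindep
  rw [hrange] at hfr
  show Module.finrank ℝ (Submodule.span ℝ Face) = 2 ^ n - 1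
  rw [hspan, hfr, Fintype.card_coe, hE,
    Finset.card_erase_of_mem (Finset.mem_powerset.2 (Finset.Subset.refl T)),
    Finset.card_powerset, hTdef, Nat.card_Icc]
  have h : n + 1 - 1 = n := by omega
  rw [h]
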